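/- Let T be a bounded self-adjoint positive semidefinite operator on a Hilbert space with ‖T‖ ≤ κ², λ > 0, and suppose S is another bounded self-adjoint positive semidefinite operator with ‖(λI+T)^{-1/2}(T − S)‖ ≤ Ξ and ‖(λI+T)(λI+S)^{-1}‖ ≤ Ω. Then for 3/2 ≤ r ≤ 2, ‖(λI + S)^{-3/2} T^{r−1/2}‖ ≤ λ^{-1} Ω Ξ κ^{2r−3} + λ^{r−2} Ω^{1/2}. -/

import Mathlib

open scoped NNReal ENNReal

section Aux

variable {H : Type*} [NormedAddCommGroup H] [InnerProductSpace ℂ H] [CompleteSpace H]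

private lemma aux_radius_comm (a b : H →L[ℂ] H) :
    spectralRadius ℝ (a * b) = spectralRadius ℝ (b * a) := by
  have key : ∀ x y : H →L[ℂ] H, spectralRadius ℝ (x * y) ≤ spectralRadius ℝ (y * x) := by
    intro x y
    refine iSup₂_le fun k hk => ?_
    rcases eq_or_ne k 0 with rfl | h
    · simp
    · have hk' : k ∈ spectrum ℝ (y * x) \ {0} := by
        rw [← spectrum.nonzero_mul_comm]; exact ⟨hk, h⟩
      exact le_iSup₂ (α := ℝ≥0∞) k hk'.1
  exact le_antisymm (key a b) (key b a)

private lemma aux_shift (a : H →L[ℂ] H) (ha : 0 ≤ a) (lam : ℝ) (hlam : 0 ≤ lam) :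
    (lam : ℂ) • (1 : H →L[ℂ] H) + a = cfc (fun x : ℝ≥0 => lam.toNNReal + x) a := by
  rw [cfc_add a (fun _ => lam.toNNReal) (fun x => x), cfc_const _ a, cfc_id' ℝ≥0 a,
    Algebra.algebraMap_eq_smul_one, NNReal.smul_def, Real.coe_toNNReal _ hlam,
    ← Complex.coe_smul]

private lemma aux_nonneg (a : H →L[ℂ] H) (ha : 0 ≤ a) (lam : ℝ) (hlam : 0 ≤ lam) :
    0 ≤ (lam : ℂ) • (1 : H →L[ℂ] H) + a := by
  rw [aux_shift a ha lam hlam]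
  exact cfc_predicate _ a

private lemma aux_cont (l : ℝ≥0) (hl : 0 < l) (y : ℝ) (s : Set ℝ≥0) :
    ContinuousOn (fun x : ℝ≥0 => (l + x) ^ y) s := by
  refine ContinuousOn.comp (g := fun z : ℝ≥0 => z ^ y) (f := fun x : ℝ≥0 => l + x)
    (t := {0}ᶜ) NNReal.continuousOn_rpow_const_compl_zero
    ((continuous_const.add continuous_id).continuousOn) ?_
  intro x _
  simp only [Set.mem_compl_iff, Set.mem_singleton_iff]
  exact (hl.trans_le (le_add_right le_rfl)).ne'

private lemma aux_spec (a : H →L[ℂ] H) (ha : 0 ≤ a) (lam : ℝ) (hlam : 0 < lam) :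
    spectrum ℝ≥0 ((lam : ℂ) • (1 : H →L[ℂ] H) + a)
      = (fun x : ℝ≥0 => lam.toNNReal + x) '' spectrum ℝ≥0 a := by
  rw [aux_shift a ha lam hlam.le, cfc_map_spectrum (fun x : ℝ≥0 => lam.toNNReal + x) a]

private lemma aux_unit (a : H →L[ℂ] H) (ha : 0 ≤ a) (lam : ℝ) (hlam : 0 < lam) :
    0 ∉ spectrum ℝ≥0 ((lam : ℂ) • (1 : H →L[ℂ] H) + a) := by
  rw [aux_spec a ha lam hlam]
  rintro ⟨x, -, hx0⟩
  have hl : 0 < lam.toNNReal := Real.toNNReal_pos.mpr hlam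
  exact (hl.trans_le (le_add_right le_rfl)).ne' hx0

private lemma aux_rpow_eq (a : H →L[ℂ] H) (ha : 0 ≤ a) (lam : ℝ) (hlam : 0 < lam) (y : ℝ) :
    CFC.rpow ((lam : ℂ) • (1 : H →L[ℂ] H) + a) y
      = cfc (fun x : ℝ≥0 => (lam.toNNReal + x) ^ y) a := by
  have hl : 0 < lam.toNNReal := Real.toNNReal_pos.mpr hlam
  have hg : ContinuousOn (fun x : ℝ≥0 => x ^ y)
      ((fun x : ℝ≥0 => lam.toNNReal + x) '' spectrum ℝ≥0 a) := by
    refine NNReal.continuousOn_rpow_const (Or.inl ?_)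
    rintro ⟨x, -, hx0⟩
    exact (hl.trans_le (le_add_right le_rfl)).ne' hx0
  have hf : ContinuousOn (fun x : ℝ≥0 => lam.toNNReal + x) (spectrum ℝ≥0 a) :=
    (continuous_const.add continuous_id).continuousOn
  show cfc (fun x : ℝ≥0 => x ^ y) _ = _
  rw [aux_shift a ha lam hlam.le,
    ← cfc_comp (fun x : ℝ≥0 => x ^ y) (fun x : ℝ≥0 => lam.toNNReal + x) a
      (hg := hg) (hf := hf) (ha := ha)]
  exact cfc_congr fun x _ => rfl

private lemma aux_norm_cfc_le (a : H →L[ℂ] H) (f : ℝ≥0 → ℝ≥0) {c : ℝ} (hc : 0 ≤ c)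
    (h : ∀ x ∈ spectrum ℝ≥0 a, (f x : ℝ) ≤ c) : ‖cfc f a‖ ≤ c := by
  have key := nnnorm_cfc_nnreal_le (f := f) (a := a) (c := c.toNNReal) fun x hx => by
    rw [← NNReal.coe_le_coe, Real.coe_toNNReal _ hc]; exact h x hx
  calc ‖cfc f a‖ = ((‖cfc f a‖₊ : ℝ≥0) : ℝ) := (coe_nnnorm _).symm
    _ ≤ (c.toNNReal : ℝ) := by exact_mod_cast key
    _ = c := Real.coe_toNNReal _ hc

private lemma aux_anti {a b : ℝ≥0} (ha : 0 < a) (hab : a ≤ b) {y : ℝ} (hy : y ≤ 0) :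
    b ^ y ≤ a ^ y := by
  have hb' : b ^ y = (b ^ (-y))⁻¹ := by rw [← NNReal.rpow_neg, neg_neg]
  have ha' : a ^ y = (a ^ (-y))⁻¹ := by rw [← NNReal.rpow_neg, neg_neg]
  rw [hb', ha']
  exact inv_anti₀ (NNReal.rpow_pos ha) (NNReal.rpow_le_rpow hab (by linarith))

private lemma aux_spec_le [Nontrivial H] (a : H →L[ℂ] H) (ha : 0 ≤ a) (x : ℝ≥0)
    (hx : x ∈ spectrum ℝ≥0 a) : (x : ℝ) ≤ ‖a‖ := by
  have h1 := (SpectrumRestricts.nnreal_of_nonneg ha).algebraMap_image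
  have h2 : (x : ℝ) ∈ spectrum ℝ a := by rw [← h1]; exact ⟨x, hx, rfl⟩
  simpa using spectrum.norm_le_norm_of_mem h2

private lemma L_half (a : H →L[ℂ] H) (ha : 0 ≤ a) (lam : ℝ) (hlam : 0 < lam) :
    ‖CFC.rpow ((lam : ℂ) • (1 : H →L[ℂ] H) + a) (-(1 / 2))‖ ≤ lam ^ (-(1 / 2) : ℝ) := by
  rw [aux_rpow_eq a ha lam hlam]
  refine aux_norm_cfc_le a _ (Real.rpow_nonneg hlam.le _) fun x hx => ?_
  have hl : 0 < lam.toNNReal := Real.toNNReal_pos.mpr hlam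
  have h1 : (lam.toNNReal + x) ^ (-(1 / 2) : ℝ) ≤ lam.toNNReal ^ (-(1 / 2) : ℝ) :=
    aux_anti hl (le_add_right le_rfl) (by norm_num)
  calc ((((lam.toNNReal + x) ^ (-(1 / 2) : ℝ)) : ℝ≥0) : ℝ)
      ≤ ((lam.toNNReal ^ (-(1 / 2) : ℝ) : ℝ≥0) : ℝ) := by exact_mod_cast h1
    _ = lam ^ (-(1 / 2) : ℝ) := by
        rw [NNReal.coe_rpow, Real.coe_toNNReal _ hlam.le]

private lemma L_inv_mix [Nontrivial H] (a : H →L[ℂ] H) (ha : 0 ≤ a) (lam : ℝ) (hlam : 0 < lam)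
    (κ : ℝ) (hκ : 1 ≤ κ) (hnorm : ‖a‖ ≤ κ ^ 2) (r : ℝ) (hr1 : 3 / 2 ≤ r) (hr2 : r ≤ 2) :
    ‖CFC.rpow ((lam : ℂ) • (1 : H →L[ℂ] H) + a) (-1) * CFC.rpow a (r - 1 / 2)‖
      ≤ κ ^ (2 * r - 3) := by
  have hl : 0 < lam.toNNReal := Real.toNNReal_pos.mpr hlam
  have hκ0 : (0:ℝ) ≤ κ := by linarith
  rw [aux_rpow_eq a ha lam hlam (-1)]
  have hTr : CFC.rpow a (r - 1 / 2) = cfc (fun x : ℝ≥0 => x ^ (r - 1 / 2)) a := rfl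
  rw [hTr, ← cfc_mul _ _ a (aux_cont lam.toNNReal hl (-1) _)
    ((NNReal.continuous_rpow_const (by linarith)).continuousOn)]
  refine aux_norm_cfc_le a _ (Real.rpow_nonneg hκ0 _) fun x hx => ?_
  have hxr : (x : ℝ) ≤ κ ^ 2 := (aux_spec_le a ha x hx).trans hnorm
  set K := κ.toNNReal with hK
  have hxK : x ≤ K ^ 2 := by
    rw [← NNReal.coe_le_coe]
    push_cast
    rw [Real.coe_toNNReal _ hκ0]
    exact hxr
  rcases eq_or_ne x 0 with rfl | hx0
  · rw [NNReal.zero_rpow (ne_of_gt (show (0:ℝ) < r - 1/2 by linarith)), mul_zero]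
    positivity
  · have h1 : (lam.toNNReal + x) ^ (-1 : ℝ) ≤ x ^ (-1 : ℝ) :=
      aux_anti (zero_lt_iff.mpr hx0) le_add_self (by norm_num)
    have h2 : (lam.toNNReal + x) ^ (-1 : ℝ) * x ^ (r - 1/2) ≤ x ^ (-1 : ℝ) * x ^ (r - 1/2) :=
      mul_le_mul_left h1 _
    have h3 : x ^ (-1 : ℝ) * x ^ (r - 1/2 : ℝ) = x ^ (r - 3/2 : ℝ) := by
      rw [← NNReal.rpow_add hx0]; congr 1; ring
    have h4 : x ^ (r - 3/2 : ℝ) ≤ (K ^ 2 : ℝ≥0) ^ (r - 3/2 : ℝ) :=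
      NNReal.rpow_le_rpow hxK (by linarith)
    have h5 : (((K ^ 2 : ℝ≥0) ^ (r - 3/2 : ℝ) : ℝ≥0) : ℝ) = κ ^ (2 * r - 3) := by
      rw [NNReal.coe_rpow]
      push_cast
      rw [Real.coe_toNNReal _ hκ0, ← Real.rpow_natCast κ 2, ← Real.rpow_mul hκ0]
      norm_num
      ring_nf
    calc (((lam.toNNReal + x) ^ (-1 : ℝ) * x ^ (r - 1/2 : ℝ) : ℝ≥0) : ℝ)
        ≤ (((K ^ 2 : ℝ≥0) ^ (r - 3/2 : ℝ) : ℝ≥0) : ℝ) := by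
          exact_mod_cast h2.trans (h3.le.trans h4)
      _ = κ ^ (2 * r - 3) := h5

private lemma L_32_mix (a : H →L[ℂ] H) (ha : 0 ≤ a) (lam : ℝ) (hlam : 0 < lam)
    (r : ℝ) (hr1 : 3 / 2 ≤ r) (hr2 : r ≤ 2) :
    ‖CFC.rpow ((lam : ℂ) • (1 : H →L[ℂ] H) + a) (-(3 / 2)) * CFC.rpow a (r - 1 / 2)‖
      ≤ lam ^ (r - 2) := by
  have hl : 0 < lam.toNNReal := Real.toNNReal_pos.mpr hlam
  rw [aux_rpow_eq a ha lam hlam (-(3/2))]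
  have hTr : CFC.rpow a (r - 1 / 2) = cfc (fun x : ℝ≥0 => x ^ (r - 1 / 2)) a := rfl
  rw [hTr, ← cfc_mul _ _ a (aux_cont lam.toNNReal hl (-(3/2)) _)
    ((NNReal.continuous_rpow_const (by linarith)).continuousOn)]
  refine aux_norm_cfc_le a _ (Real.rpow_nonneg hlam.le _) fun x hx => ?_
  have hlx : (0:ℝ≥0) < lam.toNNReal + x := hl.trans_le (le_add_right le_rfl)
  have h1 : x ^ (r - 1/2 : ℝ) ≤ (lam.toNNReal + x) ^ (r - 1/2 : ℝ) :=
    NNReal.rpow_le_rpow le_add_self (by linarith)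
  have h2 : (lam.toNNReal + x) ^ (-(3/2) : ℝ) * x ^ (r - 1/2 : ℝ)
      ≤ (lam.toNNReal + x) ^ (-(3/2) : ℝ) * (lam.toNNReal + x) ^ (r - 1/2 : ℝ) :=
    mul_le_mul_right h1 _
  have h3 : (lam.toNNReal + x) ^ (-(3/2) : ℝ) * (lam.toNNReal + x) ^ (r - 1/2 : ℝ)
      = (lam.toNNReal + x) ^ (r - 2 : ℝ) := by
    rw [← NNReal.rpow_add hlx.ne']; congr 1; ring
  have h4 : (lam.toNNReal + x) ^ (r - 2 : ℝ) ≤ lam.toNNReal ^ (r - 2 : ℝ) :=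
    aux_anti hl (le_add_right le_rfl) (by linarith)
  calc (((lam.toNNReal + x) ^ (-(3/2) : ℝ) * x ^ (r - 1/2 : ℝ) : ℝ≥0) : ℝ)
      ≤ ((lam.toNNReal ^ (r - 2 : ℝ) : ℝ≥0) : ℝ) := by
        exact_mod_cast h2.trans (h3.le.trans h4)
    _ = lam ^ (r - 2) := by rw [NNReal.coe_rpow, Real.coe_toNNReal _ hlam.le]

private lemma aux_rpow_split (b : H →L[ℂ] H) (hb : 0 ∉ spectrum ℝ≥0 b) {x y z : ℝ}
    (hxyz : x + y = z) : b ^ z = b ^ x * b ^ y := by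
  rw [← hxyz]; exact CFC.rpow_add ((spectrum.zero_notMem_iff ℝ≥0).mp hb)

end Aux

set_option maxHeartbeats 2000000
/-- Let `S`, `T` be bounded self-adjoint positive semidefinite operators on a Hilbert space
with `‖T‖ ≤ κ²` (`κ ≥ 1`), `λ > 0`, and set `Ξ = ‖(λI+T)^{-1/2}(T - S)‖`,
`Ω = ‖(λI+T)(λI+S)⁻¹‖`.  Then for `3/2 ≤ r ≤ 2`,
`‖(λI + S)^{-3/2} T^{r-1/2}‖ ≤ λ⁻¹ Ω Ξ κ^{2r-3} + λ^{r-2} Ω^{1/2}`. -/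
theorem stmt_18 {H : Type*} [NormedAddCommGroup H] [InnerProductSpace ℂ H] [CompleteSpace H]
    (S T : H →L[ℂ] H) (hS : 0 ≤ S) (hT : 0 ≤ T)
    (κ : ℝ) (hκ : 1 ≤ κ) (hTnorm : ‖T‖ ≤ κ ^ 2)
    (lam : ℝ) (hlam : 0 < lam)
    (Ξ Ω : ℝ)
    (hΞ : Ξ = ‖CFC.rpow ((lam : ℂ) • (1 : H →L[ℂ] H) + T) (-(1 / 2)) * (T - S)‖)
    (hΩ : Ω = ‖((lam : ℂ) • (1 : H →L[ℂ] H) + T) *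
      CFC.rpow ((lam : ℂ) • (1 : H →L[ℂ] H) + S) (-1)‖)
    (r : ℝ) (hr1 : 3 / 2 ≤ r) (hr2 : r ≤ 2) :
    ‖CFC.rpow ((lam : ℂ) • (1 : H →L[ℂ] H) + S) (-(3 / 2)) * CFC.rpow T (r - 1 / 2)‖ ≤
      lam⁻¹ * Ω * Ξ * κ ^ (2 * r - 3) + lam ^ (r - 2) * Real.sqrt Ω := by
  rcases subsingleton_or_nontrivial H with hH | hH
  · have hz : ∀ a : H →L[ℂ] H, ‖a‖ = 0 := fun a => by
      rw [Subsingleton.elim a 0, norm_zero]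
    rw [hΞ, hΩ]
    simp only [hz, Real.sqrt_zero, mul_zero, zero_mul, add_zero]
    simp [hz]
  · -- nontrivial case
    set A := (lam : ℂ) • (1 : H →L[ℂ] H) + T with hAdef
    set B := (lam : ℂ) • (1 : H →L[ℂ] H) + S with hBdef
    simp only [CFC.rpow_eq_pow] at hΞ hΩ ⊢
    have hA0 : 0 ≤ A := aux_nonneg T hT lam hlam.le
    have hB0 : 0 ≤ B := aux_nonneg S hS lam hlam.le
    have h0A : 0 ∉ spectrum ℝ≥0 A := aux_unit T hT lam hlam
    have h0B : 0 ∉ spectrum ℝ≥0 B := aux_unit S hS lam hlam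
    have hΩ0 : 0 ≤ Ω := hΩ ▸ norm_nonneg _
    have hΞ0 : 0 ≤ Ξ := hΞ ▸ norm_nonneg _
    have i1 : B ^ (-(3/2) : ℝ) = B ^ (-(1/2) : ℝ) * B ^ (-1 : ℝ) :=
      aux_rpow_split B h0B (by norm_num)
    have i2 : A ^ (-1 : ℝ) = A ^ (-(1/2) : ℝ) * A ^ (-(1/2) : ℝ) :=
      aux_rpow_split A h0A (by norm_num)
    have i3 : A * A ^ (-1 : ℝ) = 1 := by
      have h := aux_rpow_split A h0A (show (1 : ℝ) + (-1) = 0 by norm_num)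
      rw [CFC.rpow_zero A hA0, CFC.rpow_one A hA0] at h
      exact h.symm
    have i4 : B ^ (-(1/2) : ℝ) = B ^ (-(3/2) : ℝ) * B := by
      have h := aux_rpow_split B h0B (show (-(3/2) : ℝ) + 1 = -(1/2) by norm_num)
      rwa [CFC.rpow_one B hB0] at h
    have i5 : A ^ (-1 : ℝ) = A ^ ((1/2) : ℝ) * A ^ (-(3/2) : ℝ) :=
      aux_rpow_split A h0A (by norm_num)
    have i6 : A = A ^ ((1/2) : ℝ) * A ^ ((1/2) : ℝ) := by
      have h := aux_rpow_split A h0A (show (1/2 : ℝ) + (1/2) = 1 by norm_num)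
      rwa [CFC.rpow_one A hA0] at h
    have i7 : B ^ (-1 : ℝ) = B ^ (-(1/2) : ℝ) * B ^ (-(1/2) : ℝ) :=
      aux_rpow_split B h0B (by norm_num)
    have hsum : (T - S) + B = A := by rw [hBdef, hAdef]; abel
    have K : B ^ (-(3/2) : ℝ) * (T - S) * A ^ (-1 : ℝ) + B ^ (-(1/2) : ℝ) * A ^ (-1 : ℝ)
        = B ^ (-(3/2) : ℝ) := by
      calc B ^ (-(3/2) : ℝ) * (T - S) * A ^ (-1 : ℝ) + B ^ (-(1/2) : ℝ) * A ^ (-1 : ℝ)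
          = B ^ (-(3/2) : ℝ) * ((T - S) + B) * A ^ (-1 : ℝ) := by
            rw [i4]
            noncomm_ring
        _ = B ^ (-(3/2) : ℝ) * (A * A ^ (-1 : ℝ)) := by rw [hsum, mul_assoc]
        _ = B ^ (-(3/2) : ℝ) := by rw [i3, mul_one]
    have z1 : ∀ z : H →L[ℂ] H, B ^ (-(1/2) : ℝ) * (B ^ (-1 : ℝ) * z) = B ^ (-(3/2) : ℝ) * z :=
      fun z => by rw [← mul_assoc, ← i1]
    have z2 : ∀ z : H →L[ℂ] H, A ^ (-(1/2) : ℝ) * (A ^ (-(1/2) : ℝ) * z) = A ^ (-1 : ℝ) * z :=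
      fun z => by rw [← mul_assoc, ← i2]
    have z3 : ∀ z : H →L[ℂ] H, A * (A ^ (-1 : ℝ) * z) = z :=
      fun z => by rw [← mul_assoc, i3, one_mul]
    have z5 : ∀ z : H →L[ℂ] H, A ^ ((1/2) : ℝ) * (A ^ (-(3/2) : ℝ) * z) = A ^ (-1 : ℝ) * z :=
      fun z => by rw [← mul_assoc, ← i5]
    have z6 : ∀ z : H →L[ℂ] H, A ^ ((1/2) : ℝ) * (A ^ ((1/2) : ℝ) * z) = A * z :=
      fun z => by rw [← mul_assoc, ← i6]
    have hsplit : B ^ (-(3/2) : ℝ) * T ^ (r - 1/2 : ℝ)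
        = B ^ (-(1/2) : ℝ) * ((B ^ (-1 : ℝ) * A) * (A ^ (-(1/2) : ℝ) *
            ((A ^ (-(1/2) : ℝ) * (T - S)) * (A ^ (-1 : ℝ) * T ^ (r - 1/2 : ℝ)))))
          + (B ^ (-(1/2) : ℝ) * A ^ ((1/2) : ℝ)) * (A ^ (-(3/2) : ℝ) * T ^ (r - 1/2 : ℝ)) := by
      conv_lhs => rw [← K, add_mul]
      congr 1
      · simp only [mul_assoc]
        rw [z2, z3, z1]
      · simp only [mul_assoc]
        rw [z5]
    have n1 : ‖B ^ (-(1/2) : ℝ)‖ ≤ lam ^ (-(1/2) : ℝ) := L_half S hS lam hlam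
    have n3 : ‖A ^ (-(1/2) : ℝ)‖ ≤ lam ^ (-(1/2) : ℝ) := L_half T hT lam hlam
    have n2 : ‖B ^ (-1 : ℝ) * A‖ = Ω := by
      have hsa1 : IsSelfAdjoint A := .of_nonneg hA0
      have hsa2 : IsSelfAdjoint (B ^ (-1 : ℝ)) := .of_nonneg CFC.rpow_nonneg
      have h : B ^ (-1 : ℝ) * A = star (A * B ^ (-1 : ℝ)) := by
        rw [star_mul, hsa1.star_eq, hsa2.star_eq]
      rw [h, norm_star]
      exact hΩ.symm
    have n4 : ‖A ^ (-(1/2) : ℝ) * (T - S)‖ = Ξ := hΞ.symm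
    have n5 : ‖A ^ (-1 : ℝ) * T ^ (r - 1/2 : ℝ)‖ ≤ κ ^ (2 * r - 3) :=
      L_inv_mix T hT lam hlam κ hκ hTnorm r hr1 hr2
    have n6 : ‖A ^ (-(3/2) : ℝ) * T ^ (r - 1/2 : ℝ)‖ ≤ lam ^ (r - 2) :=
      L_32_mix T hT lam hlam r hr1 hr2
    have n7 : ‖B ^ (-(1/2) : ℝ) * A ^ ((1/2) : ℝ)‖ ≤ Real.sqrt Ω := by
      set C := B ^ (-(1/2) : ℝ) * A ^ ((1/2) : ℝ) with hCdef
      have hsaB : IsSelfAdjoint (B ^ (-(1/2) : ℝ)) := .of_nonneg CFC.rpow_nonneg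
      have hsaA : IsSelfAdjoint (A ^ ((1/2) : ℝ)) := .of_nonneg CFC.rpow_nonneg
      have hCC : C * star C = B ^ (-(1/2) : ℝ) * (A * B ^ (-(1/2) : ℝ)) := by
        rw [hCdef, star_mul, hsaA.star_eq, hsaB.star_eq]
        simp only [mul_assoc]
        rw [z6]
      have hDsa : IsSelfAdjoint (B ^ (-(1/2) : ℝ) * (A * B ^ (-(1/2) : ℝ))) :=
        hCC ▸ IsSelfAdjoint.mul_star_self C
      have hrad : spectralRadius ℝ (B ^ (-(1/2) : ℝ) * (A * B ^ (-(1/2) : ℝ)))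
          = spectralRadius ℝ (A * B ^ (-1 : ℝ)) := by
        rw [aux_radius_comm]
        congr 1
        rw [mul_assoc, ← i7]
      have hDn : ‖B ^ (-(1/2) : ℝ) * (A * B ^ (-(1/2) : ℝ))‖ ≤ Ω := by
        rw [← hDsa.toReal_spectralRadius_eq_norm, hrad, hΩ]
        have h1 : spectralRadius ℝ (A * B ^ (-1 : ℝ)) ≤ (‖A * B ^ (-1 : ℝ)‖₊ : ℝ≥0∞) :=
          spectrum.spectralRadius_le_nnnorm (𝕜 := ℝ) _
        have h2 := ENNReal.toReal_mono (by simp) h1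
        simpa using h2
      have hC2 : ‖C‖ ^ 2 ≤ Ω := by
        rw [pow_two, ← CStarRing.norm_self_mul_star, hCC]
        exact hDn
      calc ‖C‖ = Real.sqrt (‖C‖ ^ 2) := (Real.sqrt_sq (norm_nonneg _)).symm
        _ ≤ Real.sqrt Ω := Real.sqrt_le_sqrt hC2
    calc ‖B ^ (-(3/2) : ℝ) * T ^ (r - 1/2 : ℝ)‖
        = ‖B ^ (-(1/2) : ℝ) * ((B ^ (-1 : ℝ) * A) * (A ^ (-(1/2) : ℝ) *
            ((A ^ (-(1/2) : ℝ) * (T - S)) * (A ^ (-1 : ℝ) * T ^ (r - 1/2 : ℝ)))))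
          + (B ^ (-(1/2) : ℝ) * A ^ ((1/2) : ℝ)) * (A ^ (-(3/2) : ℝ) * T ^ (r - 1/2 : ℝ))‖ := by
          rw [hsplit]
      _ ≤ lam ^ (-(1/2) : ℝ) * (Ω * (lam ^ (-(1/2) : ℝ) * (Ξ * κ ^ (2 * r - 3))))
          + Real.sqrt Ω * lam ^ (r - 2) := by
          refine (norm_add_le _ _).trans (add_le_add ?_ ?_)
          · refine (norm_mul_le _ _).trans ?_
            refine mul_le_mul n1 ?_ (norm_nonneg _) (Real.rpow_nonneg hlam.le _)
            refine (norm_mul_le _ _).trans ?_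
            rw [n2]
            refine mul_le_mul_of_nonneg_left ?_ hΩ0
            refine (norm_mul_le _ _).trans ?_
            refine mul_le_mul n3 ?_ (norm_nonneg _) (Real.rpow_nonneg hlam.le _)
            refine (norm_mul_le _ _).trans ?_
            rw [n4]
            exact mul_le_mul_of_nonneg_left n5 hΞ0
          · exact (norm_mul_le _ _).trans (mul_le_mul n7 n6 (norm_nonneg _) (Real.sqrt_nonneg _))
      _ = lam⁻¹ * Ω * Ξ * κ ^ (2 * r - 3) + lam ^ (r - 2) * Real.sqrt Ω := by
          have hh : lam ^ (-(1/2) : ℝ) * lam ^ (-(1/2) : ℝ) = lam⁻¹ := by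
            rw [← Real.rpow_add hlam, show (-(1/2) + -(1/2) : ℝ) = -1 by norm_num,
              Real.rpow_neg_one]
          rw [← hh]
          ring
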